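/- Let θ > 0, B ≥ 0, and let z, μ ∈ ℝ^d with ‖μ‖₂ ≤ B, z ≠ 0 and z ≠ μ. Define h = [min(‖z−μ‖₂², 1/θ)/‖z−μ‖₂²]·[‖z‖₂²/min(‖z‖₂², 1/θ)]. Then 1 − 2B·√θ − B²·θ ≤ h ≤ 1 + 2B·√θ + B²·θ. -/

import Mathlib

open MeasureTheory ProbabilityTheory Matrix Real
open scoped InnerProductSpace

noncomputable section

/-- Vectors in `ℝ^d` with the Euclidean norm. -/
abbrev Vec (d : ℕ) := EuclideanSpace ℝ (Fin d)

/-- Real `d × d` matrices. -/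
abbrev Mat (d : ℕ) := Matrix (Fin d) (Fin d) ℝ

variable {d : ℕ}

/-- Operator (spectral) norm of a square matrix. -/
noncomputable def opNorm (A : Mat d) : ℝ := ‖Matrix.toEuclideanCLM (𝕜 := ℝ) A‖

/-- Frobenius (Hilbert–Schmidt) norm. -/
noncomputable def frobNorm (A : Mat d) : ℝ := Real.sqrt (∑ i, ∑ j, (A i j) ^ 2)

/-- Nuclear norm `‖A‖₁ = tr √(AᵀA)`. -/
noncomputable def nuclearNorm (A : Mat d) : ℝ :=
  ((Matrix.posSemidef_conjTranspose_mul_self A).1.eigenvectorUnitary.1 *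
    Matrix.diagonal (Real.sqrt ∘ (Matrix.posSemidef_conjTranspose_mul_self A).1.eigenvalues) *
    (star (Matrix.posSemidef_conjTranspose_mul_self A).1.eigenvectorUnitary : Mat d)).trace

/-- Outer product `v vᵀ`. -/
def outer (v : Vec d) : Mat d := Matrix.of fun i j => v i * v j

/-- Entrywise expectation of a random matrix. -/
noncomputable def matExp {Ω : Type*} [MeasurableSpace Ω] (P : Measure Ω) (F : Ω → Mat d) : Mat d :=
  Matrix.of fun i j => ∫ ω, F ω i j ∂P

/-- The truncation function `ψ(x) = sign(x) · min(|x|, 1)`. -/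
noncomputable def psi (x : ℝ) : ℝ := Real.sign x * min |x| 1

/-- Mean vector `μ₀ = 𝔼 X`. -/
noncomputable def meanVec {Ω : Type*} [MeasurableSpace Ω] (P : Measure Ω) (X : Ω → Vec d) : Vec d :=
  ∫ ω, X ω ∂P

/-- Covariance matrix `Σ₀ = 𝔼[(X−μ₀)(X−μ₀)ᵀ]`. -/
noncomputable def covMat {Ω : Type*} [MeasurableSpace Ω] (P : Measure Ω) (X : Ω → Vec d) : Mat d :=
  matExp P (fun ω => outer (X ω - meanVec P X))

/-- `σ₀ = ‖𝔼[‖X−μ₀‖₂² (X−μ₀)(X−μ₀)ᵀ]‖^{1/2}`. -/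
noncomputable def sigma0 {Ω : Type*} [MeasurableSpace Ω] (P : Measure Ω) (X : Ω → Vec d) : ℝ :=
  Real.sqrt (opNorm (matExp P
    (fun ω => ‖X ω - meanVec P X‖ ^ 2 • outer (X ω - meanVec P X))))

/-- Intrinsic dimension `d̄ = σ₀²/‖Σ₀‖²`. -/
noncomputable def dbar {Ω : Type*} [MeasurableSpace Ω] (P : Measure Ω) (X : Ω → Vec d) : ℝ :=
  (sigma0 P X) ^ 2 / (opNorm (covMat P X)) ^ 2

/-- The truncated covariance estimator
`Σ̂(θ) = (mθ)⁻¹ ∑ᵢ ψ(θ‖Xᵢ−μ̂‖₂²) (Xᵢ−μ̂)(Xᵢ−μ̂)ᵀ/‖Xᵢ−μ̂‖₂²`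
(a summand being `0` when `Xᵢ = μ̂`, by the `0/0 = 0` convention). -/
noncomputable def truncCov {Ω : Type*} (m : ℕ) (X : Fin m → Ω → Vec d)
    (muhat : Ω → Vec d) (θ : ℝ) (ω : Ω) : Mat d :=
  (1 / (m * θ)) •
    ∑ i, (psi (θ * ‖X i ω - muhat ω‖ ^ 2) / ‖X i ω - muhat ω‖ ^ 2) • outer (X i ω - muhat ω)

/-- `μ̂` is a geometric median of the group means of the groups `G j` of the sample `X`:
it minimizes `z ↦ ∑ⱼ ‖z − μ̂ⱼ‖₂` where `μ̂ⱼ = |G j|⁻¹ ∑_{i ∈ G j} Xᵢ`. -/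
def IsMedianOfMeans {Ω : Type*} {m k : ℕ} (X : Fin m → Ω → Vec d)
    (G : Fin k → Finset (Fin m)) (muhat : Ω → Vec d) : Prop :=
  ∀ ω, ∀ z : Vec d,
    ∑ j, ‖muhat ω - ((G j).card : ℝ)⁻¹ • ∑ i ∈ G j, X i ω‖ ≤
      ∑ j, ‖z - ((G j).card : ℝ)⁻¹ • ∑ i ∈ G j, X i ω‖

/-- `θ_j = (1/σ_j)·√(β/m)` with `σ_j = σ_min 2^j`. -/
noncomputable def lepskiTheta (σmin β : ℝ) (m : ℕ) (j : ℤ) : ℝ :=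
  (1 / (σmin * 2 ^ j)) * Real.sqrt (β / m)

/-- The index set `𝒥 = {j ∈ ℤ : σ_min ≤ σ_min 2^j < 2 σ_max}`. -/
def lepskiJ (σmin σmax : ℝ) : Set ℤ :=
  {j : ℤ | σmin ≤ σmin * 2 ^ j ∧ σmin * 2 ^ j < 2 * σmax}

/-- `Σ̂_{m,j} = Σ̂(θ_j)`. -/
noncomputable def lepskiSig {Ω : Type*} (m : ℕ) (X : Fin m → Ω → Vec d) (muhat : Ω → Vec d)
    (σmin β : ℝ) (j : ℤ) (ω : Ω) : Mat d :=
  truncCov m X muhat (lepskiTheta σmin β m j) ω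

/-- `jstar ω` is the minimal `j ∈ 𝒥` such that for all `l ∈ 𝒥` with `l > j`,
`‖Σ̂_{m,l} − Σ̂_{m,j}‖ ≤ 6 σ_l √(β/m)`. -/
def IsLepskiIndex {Ω : Type*} {m : ℕ} (X : Fin m → Ω → Vec d) (muhat : Ω → Vec d)
    (σmin σmax β : ℝ) (jstar : Ω → ℤ) : Prop :=
  ∀ ω, jstar ω ∈ lepskiJ σmin σmax ∧
    (∀ l ∈ lepskiJ σmin σmax, jstar ω < l →
      opNorm (lepskiSig m X muhat σmin β l ω - lepskiSig m X muhat σmin β (jstar ω) ω) ≤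
        6 * (σmin * 2 ^ l) * Real.sqrt (β / m)) ∧
    (∀ j ∈ lepskiJ σmin σmax,
      (∀ l ∈ lepskiJ σmin σmax, j < l →
        opNorm (lepskiSig m X muhat σmin β l ω - lepskiSig m X muhat σmin β j ω) ≤
          6 * (σmin * 2 ^ l) * Real.sqrt (β / m)) →
      jstar ω ≤ j)

/-- Orthogonal projector onto the span of the (orthonormal eigen-)vectors `u 0, …, u (k-1)`. -/
noncomputable def projTop (k : ℕ) (u : Fin d → Fin d → ℝ) : Mat d :=
  ∑ i : Fin d, if (i : ℕ) < k then Matrix.of (fun a b => u i a * u i b) else (0 : Mat d)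

/-- Quadratic form `vᵀ M v`. -/
def quadForm (M : Mat d) (v : Vec d) : ℝ := ∑ i, ∑ j, v i * M i j * v j

/-- Matrix function `f(A) = U f(Λ) Uᵀ` defined through the spectral decomposition of a
Hermitian (real symmetric) matrix. -/
noncomputable def matApply (f : ℝ → ℝ) {A : Mat d} (hA : A.IsHermitian) : Mat d :=
  (hA.eigenvectorUnitary : Mat d) * Matrix.diagonal (f ∘ hA.eigenvalues) *
    star (hA.eigenvectorUnitary : Mat d)

end

set_option maxHeartbeats 1000000 in
lemma key (s r u B : ℝ) (hs : 0 < s) (hr : 0 < r) (hu : 0 < u) (hB : 0 ≤ B)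
    (h1 : s ≤ r + B) (h2 : r ≤ s + B) :
    1 - 2*B/u - B^2/u^2 ≤ min (s^2) (u^2) / s^2 * (r^2 / min (r^2) (u^2)) ∧
    min (s^2) (u^2) / s^2 * (r^2 / min (r^2) (u^2)) ≤ 1 + 2*B/u + B^2/u^2 := by
  have hBu : 0 ≤ 2*B/u := by positivity
  have hBu2 : 0 ≤ B^2/u^2 := by positivity
  have hplus : 1 + 2*B/u + B^2/u^2 = (u+B)^2/u^2 := by field_simp; ring
  have hminus : 1 - 2*B/u - B^2/u^2 = (u^2-2*B*u-B^2)/u^2 := by field_simp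
  rcases le_or_gt s u with hsu | hsu <;> rcases le_or_gt r u with hru | hru
  · rw [min_eq_left (by nlinarith), min_eq_left (by nlinarith),
      div_self (by positivity), div_self (by positivity)]
    constructor <;> nlinarith
  · rw [min_eq_left (by nlinarith), min_eq_right (by nlinarith),
      div_self (by positivity), one_mul, hplus, hminus]
    have hr2 : r^2 ≤ (u+B)^2 := by nlinarith
    have hu2 : u^2 ≤ r^2 := by nlinarith
    constructor
    · rw [div_le_div_iff₀ (by positivity) (by positivity)]
      have e1 := mul_le_mul_of_nonneg_right hu2 (sq_nonneg u)
      nlinarith [mul_nonneg (mul_nonneg hB hu.le) (sq_nonneg u),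
        mul_nonneg (sq_nonneg B) (sq_nonneg u)]
    · rw [div_le_div_iff₀ (by positivity) (by positivity)]
      exact mul_le_mul_of_nonneg_right hr2 (sq_nonneg u)
  · rw [min_eq_right (by nlinarith), min_eq_left (by nlinarith),
      div_self (by positivity), mul_one, hplus, hminus]
    have hsub : s ≤ u + B := by linarith
    have hs2 : s^2 ≤ (u+B)^2 := by nlinarith
    have hus : u^2 ≤ s^2 := by nlinarith
    constructor
    · rw [div_le_div_iff₀ (by positivity) (by positivity)]
      rcases le_or_gt (u^2-2*B*u-B^2) 0 with hc | hc
      · nlinarith [mul_nonpos_of_nonpos_of_nonneg hc (sq_nonneg s)]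
      · have := mul_le_mul_of_nonneg_left hs2 hc.le
        nlinarith [sq_nonneg (2*B*u + B^2)]
    · rw [div_le_div_iff₀ (by positivity) (by positivity)]
      have h1' : u^2 ≤ (u+B)^2 := by nlinarith
      calc u^2 * u^2 ≤ (u+B)^2 * u^2 := by nlinarith [sq_nonneg u]
        _ ≤ (u+B)^2 * s^2 := by nlinarith [sq_nonneg (u+B)]
  · rw [min_eq_right (by nlinarith), min_eq_right (by nlinarith)]
    have hexpr : u^2/s^2 * (r^2/u^2) = r^2/s^2 := by field_simp
    rw [hexpr, hplus, hminus]
    have hkey1 : 0 ≤ 2*B*s*u*(s-u) := by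
      have : 0 ≤ s - u := by linarith
      positivity
    have hkey2 : 0 ≤ B^2*(s^2-u^2) := by nlinarith [mul_nonneg (mul_nonneg (sq_nonneg B) (by linarith : (0:ℝ) ≤ s - u)) (by linarith : (0:ℝ) ≤ s + u)]
    constructor
    · rw [div_le_div_iff₀ (by positivity) (by positivity)]
      rcases le_or_gt s B with hsB | hsB
      · have hc : u^2 - 2*B*u - B^2 ≤ 0 := by nlinarith
        nlinarith [mul_nonpos_of_nonpos_of_nonneg hc (sq_nonneg s),
          mul_nonneg (sq_nonneg r) (sq_nonneg u)]
      · have hr2 : (s-B)^2 ≤ r^2 := by nlinarith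
        have e1 := mul_le_mul_of_nonneg_right hr2 (sq_nonneg u)
        nlinarith
    · rw [div_le_div_iff₀ (by positivity) (by positivity)]
      have hr2 : r^2 ≤ (s+B)^2 := by nlinarith
      have e1 := mul_le_mul_of_nonneg_right hr2 (sq_nonneg u)
      nlinarith

/-- deterministic bounds on the ratio of truncation factors. -/
theorem stmt12 {d : ℕ} (θ B : ℝ) (z μ : Vec d)
    (hθ : 0 < θ) (hB : 0 ≤ B) (hμ : ‖μ‖ ≤ B) (hz : z ≠ 0) (hzμ : z ≠ μ) :
    1 - 2 * B * Real.sqrt θ - B ^ 2 * θ ≤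
        (min (‖z - μ‖ ^ 2) (1 / θ) / ‖z - μ‖ ^ 2) * (‖z‖ ^ 2 / min (‖z‖ ^ 2) (1 / θ)) ∧
      (min (‖z - μ‖ ^ 2) (1 / θ) / ‖z - μ‖ ^ 2) * (‖z‖ ^ 2 / min (‖z‖ ^ 2) (1 / θ)) ≤
        1 + 2 * B * Real.sqrt θ + B ^ 2 * θ := by
  have hs : 0 < ‖z - μ‖ := norm_pos_iff.2 (sub_ne_zero.2 hzμ)
  have hr : 0 < ‖z‖ := norm_pos_iff.2 hz
  have hst : 0 < Real.sqrt θ := Real.sqrt_pos.2 hθ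
  have hu : 0 < (Real.sqrt θ)⁻¹ := by positivity
  have htri : |‖z - μ‖ - ‖z‖| ≤ B := by
    calc |‖z - μ‖ - ‖z‖| ≤ ‖(z - μ) - z‖ := abs_norm_sub_norm_le _ _
      _ = ‖μ‖ := by simp
      _ ≤ B := hμ
  obtain ⟨h1', h2'⟩ := abs_le.1 htri
  have hk := key ‖z - μ‖ ‖z‖ (Real.sqrt θ)⁻¹ B hs hr hu hB (by linarith) (by linarith)
  have hu2 : ((Real.sqrt θ)⁻¹)^2 = 1/θ := by
    rw [inv_pow, Real.sq_sqrt hθ.le, one_div]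
  have e1 : 2*B/(Real.sqrt θ)⁻¹ = 2*B*Real.sqrt θ := by field_simp
  have e2 : B^2/(1/θ) = B^2*θ := by field_simp
  rw [hu2, e1, e2] at hk
  constructor
  · have := hk.1; linarith
  · have := hk.2; linarith
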